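/- For a triangle ABC with an interior angle at A of at least 120 degrees, the vertex A minimizes the sum of distances ‖x - A‖ + ‖x - B‖ + ‖x - C‖ over x ∈ ℝ². -/

import Mathlib

open Real EuclideanGeometry RealInnerProductSpace

/-- If the interior angle of a triangle at vertex A is at least 120 degrees,
then A minimizes the sum of distances to the three vertices. -/
theorem obtuse_vertex_minimizes_distance_sum
    (A B C : EuclideanSpace ℝ (Fin 2)) (hB : B ≠ A) (hC : C ≠ A)
    (hangle : 2 * π / 3 ≤ ∠ B A C) :
    ∀ x : EuclideanSpace ℝ (Fin 2),
      ‖A - A‖ + ‖A - B‖ + ‖A - C‖ ≤ ‖x - A‖ + ‖x - B‖ + ‖x - C‖ := by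
  intro x
  set u : EuclideanSpace ℝ (Fin 2) := B - A with hu
  set v : EuclideanSpace ℝ (Fin 2) := C - A with hv
  have hu0 : u ≠ 0 := sub_ne_zero.mpr hB
  have hv0 : v ≠ 0 := sub_ne_zero.mpr hC
  have ha : (0:ℝ) < ‖u‖ := norm_pos_iff.mpr hu0
  have hb : (0:ℝ) < ‖v‖ := norm_pos_iff.mpr hv0
  have hang : ∠ B A C = InnerProductGeometry.angle u v := by
    rw [EuclideanGeometry.angle, hu, hv]
    norm_num [vsub_eq_sub]
  -- cos bound
  have hcos23 : Real.cos (2 * π / 3) = -(1/2) := by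
    rw [show (2 * π / 3 : ℝ) = π - π/3 by ring, Real.cos_pi_sub, Real.cos_pi_div_three]
  have hcos : Real.cos (InnerProductGeometry.angle u v) ≤ -(1/2) := by
    rw [← hcos23]
    exact Real.cos_le_cos_of_nonneg_of_le_pi (by positivity)
      (hang ▸ EuclideanGeometry.angle_le_pi B A C) (hang ▸ hangle)
  have hinner : ⟪u, v⟫ ≤ -(1/2) * (‖u‖ * ‖v‖) := by
    have := InnerProductGeometry.cos_angle u v
    have h : ⟪u, v⟫ = Real.cos (InnerProductGeometry.angle u v) * (‖u‖ * ‖v‖) := by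
      field_simp at this ⊢
      linarith [this]
    rw [h]
    have hab : (0:ℝ) < ‖u‖ * ‖v‖ := by positivity
    nlinarith
  set u' : EuclideanSpace ℝ (Fin 2) := ‖u‖⁻¹ • u with hu'
  set v' : EuclideanSpace ℝ (Fin 2) := ‖v‖⁻¹ • v with hv'
  have hnu' : ‖u'‖ = 1 := norm_smul_inv_norm hu0
  have hnv' : ‖v'‖ = 1 := norm_smul_inv_norm hv0
  have hiuv : ⟪u', v'⟫ ≤ -(1/2) := by
    rw [hu', hv', real_inner_smul_left, real_inner_smul_right]
    rw [show ‖u‖⁻¹ * (‖v‖⁻¹ * ⟪u, v⟫) = ⟪u, v⟫ / (‖u‖ * ‖v‖) by ring]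
    rw [div_le_iff₀ (by positivity)]
    nlinarith
  have hsum : ‖u' + v'‖ ≤ 1 := by
    have hsq : ‖u' + v'‖ ^ 2 ≤ 1 := by
      have := norm_add_sq_real u' v'
      nlinarith [this]
    nlinarith [norm_nonneg (u' + v')]
  set w : EuclideanSpace ℝ (Fin 2) := x - A with hw
  -- three inequalities
  have h1 : ⟪w, u'⟫ + ⟪w, v'⟫ ≤ ‖x - A‖ := by
    have : ⟪w, u' + v'⟫ ≤ ‖w‖ * ‖u' + v'‖ := real_inner_le_norm w (u' + v')
    rw [inner_add_right] at this
    have hw1 : ‖w‖ * ‖u' + v'‖ ≤ ‖w‖ := by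
      nlinarith [norm_nonneg w]
    calc ⟪w, u'⟫ + ⟪w, v'⟫ ≤ ‖w‖ := by linarith
    _ = ‖x - A‖ := rfl
  have h2 : ‖u‖ - ⟪w, u'⟫ ≤ ‖x - B‖ := by
    have hxB : x - B = w - u := by rw [hw, hu]; abel
    have hle : ⟪u - w, u'⟫ ≤ ‖u - w‖ * ‖u'‖ := real_inner_le_norm _ _
    rw [inner_sub_left, hnu', mul_one] at hle
    have huu : ⟪u, u'⟫ = ‖u‖ := by
      rw [hu', real_inner_smul_right, real_inner_self_eq_norm_sq]
      field_simp
    have hrev : ‖u - w‖ = ‖x - B‖ := by rw [hxB, norm_sub_rev]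
    rw [huu, hrev] at hle
    have : ⟪w, u'⟫ = ⟪u', w⟫ := real_inner_comm _ _
    linarith [hle, this.ge]
  have h3 : ‖v‖ - ⟪w, v'⟫ ≤ ‖x - C‖ := by
    have hxC : x - C = w - v := by rw [hw, hv]; abel
    have hle : ⟪v - w, v'⟫ ≤ ‖v - w‖ * ‖v'‖ := real_inner_le_norm _ _
    rw [inner_sub_left, hnv', mul_one] at hle
    have hvv : ⟪v, v'⟫ = ‖v‖ := by
      rw [hv', real_inner_smul_right, real_inner_self_eq_norm_sq]
      field_simp
    have hrev : ‖v - w‖ = ‖x - C‖ := by rw [hxC, norm_sub_rev]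
    rw [hvv, hrev] at hle
    have : ⟪w, v'⟫ = ⟪v', w⟫ := real_inner_comm _ _
    linarith [hle, this.ge]
  have hAB : ‖A - B‖ = ‖u‖ := by rw [hu, norm_sub_rev]
  have hAC : ‖A - C‖ = ‖v‖ := by rw [hv, norm_sub_rev]
  have hAA : ‖A - A‖ = 0 := by simp
  rw [hAA, hAB, hAC]
  linarith
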